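/- Let a ≥ 2 be a real number and let c > a²/(2e), where e is Euler's number. Then φ_{a,c}(z) < 0 for every z ∈ (0,1), i.e. the anabolic phase function is everywhere negative on (0,1). -/
import Mathlib


/-- If `a ≥ 2` and `c > a²/(2e)`, then the anabolic phase function
`φ_{a,c}(z) = log z + log a − c·z²/(1−z)` is negative everywhere on `(0,1)`. -/
theorem stmt_6 (a c : ℝ) (ha : 2 ≤ a) (hc : a ^ 2 / (2 * Real.exp 1) < c) :
    ∀ z ∈ Set.Ioo (0 : ℝ) 1,
      Real.log z + Real.log a - c * z ^ 2 / (1 - z) < 0 := by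
  intro z hz
  obtain ⟨hz0, hz1⟩ := hz
  have ha0 : (0:ℝ) < a := by linarith
  have he : (0:ℝ) < Real.exp 1 := Real.exp_pos 1
  have h1z : (0:ℝ) < 1 - z := by linarith
  have key : Real.log (a * z) ≤ (a * z) ^ 2 / (2 * Real.exp 1) := by
    have ht : (0:ℝ) < a * z := mul_pos ha0 hz0
    have h := Real.log_le_sub_one_of_pos
      (show (0:ℝ) < (a * z) ^ 2 / Real.exp 1 from by positivity)
    rw [Real.log_div (by positivity) (ne_of_gt he), Real.log_pow, Real.log_exp] at h
    have h2e : (0:ℝ) < 2 * Real.exp 1 := by positivity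
    rw [le_div_iff₀ h2e]
    push_cast at h
    have heq : (a * z) ^ 2 / Real.exp 1 * Real.exp 1 = (a * z) ^ 2 :=
      div_mul_cancel₀ _ (ne_of_gt he)
    nlinarith [mul_le_mul_of_nonneg_right h he.le, heq]
  have hlog : Real.log z + Real.log a = Real.log (a * z) := by
    rw [Real.log_mul (ne_of_gt ha0) (ne_of_gt hz0)]; ring
  have hac : a ^ 2 < c * (2 * Real.exp 1) := (div_lt_iff₀ (by positivity)).mp hc
  have h2 : (a * z) ^ 2 / (2 * Real.exp 1) < c * z ^ 2 / (1 - z) := by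
    rw [div_lt_div_iff₀ (by positivity) h1z]
    nlinarith [sq_nonneg z, mul_pos hz0 (mul_pos hz0 hz0),
      mul_pos (mul_pos ha0 ha0) (mul_pos hz0 (mul_pos hz0 hz0)),
      mul_pos (mul_pos hz0 hz0) h1z]
  linarith [key, h2]
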